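/- Let f : ℝⁿ → ℝ be locally Lipschitz and let D ⊆ ℝⁿ be a set of full Lebesgue measure on which f is differentiable. Define the Clarke subdifferential ∂̄f(x) as the convex hull of all limits lim_j ∇f(yʲ) over sequences yʲ → x with f differentiable at each yʲ. Then for every x and every ε > 0, ∂̄f(x) ⊆ closure(convexHull(∇f(B(x,ε) ∩ D))). -/

import Mathlib

open Filter MeasureTheory Metric Set
open scoped Topology NNReal

section Aux

variable {n : ℕ}

local notation "E" => EuclideanSpace ℝ (Fin n)

lemma grad_apply_aux (f : E → ℝ) (ℓ : E →L[ℝ] ℝ) (z : E) :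
    ℓ (gradient f z) = fderiv ℝ f z ((InnerProductSpace.toDual ℝ E).symm ℓ) := by
  calc ℓ (gradient f z)
      = @inner ℝ _ _ ((InnerProductSpace.toDual ℝ E).symm ℓ) (gradient f z) :=
        (InnerProductSpace.toDual_symm_apply).symm
    _ = @inner ℝ _ _ (gradient f z) ((InnerProductSpace.toDual ℝ E).symm ℓ) :=
        real_inner_comm _ _
    _ = fderiv ℝ f z ((InnerProductSpace.toDual ℝ E).symm ℓ) :=
        InnerProductSpace.toDual_symm_apply

/-- The uniform probability measure on the closed ball of radius `δ`. -/
noncomputable def unifBall (n : ℕ) (δ : ℝ) : Measure (EuclideanSpace ℝ (Fin n)) :=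
  (volume (closedBall (0 : EuclideanSpace ℝ (Fin n)) δ))⁻¹ •
    volume.restrict (closedBall (0 : EuclideanSpace ℝ (Fin n)) δ)

lemma unifBall_prob (δ : ℝ) (hδ : 0 < δ) : IsProbabilityMeasure (unifBall n δ) := by
  constructor
  rw [unifBall, Measure.smul_apply, Measure.restrict_apply MeasurableSet.univ, Set.univ_inter,
    smul_eq_mul, ENNReal.inv_mul_cancel (measure_closedBall_pos _ _ hδ).ne'
      (isCompact_closedBall _ _).measure_lt_top.ne]

lemma unifBall_ae_mem (δ : ℝ) : ∀ᵐ w ∂(unifBall n δ), w ∈ closedBall (0 : E) δ := by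
  rw [ae_iff]
  have h : {w : E | ¬ w ∈ closedBall (0:E) δ} = (closedBall (0:E) δ)ᶜ := rfl
  rw [unifBall, Measure.smul_apply, h,
    Measure.restrict_apply (measurableSet_closedBall.compl)]
  simp

lemma unifBall_absCont {S : Set E} (hS : volume S = 0) (δ : ℝ) : (unifBall n δ) S = 0 := by
  rw [unifBall, Measure.smul_apply]
  have h1 : volume.restrict (closedBall (0:E) δ) S ≤ volume S := Measure.restrict_le_self S
  rw [hS] at h1
  simp [le_antisymm h1 zero_le]

lemma ae_sub_mem_of_null {S : Set E} (hS : volume Sᶜ = 0) (z : E) (δ : ℝ) :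
    ∀ᵐ w ∂(unifBall n δ), z - w ∈ S := by
  rw [ae_iff]
  apply unifBall_absCont
  have h1 : {w : E | ¬ z - w ∈ S} = (fun w => z - w) ⁻¹' Sᶜ := rfl
  have h2 : (fun w : E => z - w) = (fun w => z + w) ∘ Neg.neg := by
    ext w; simp [sub_eq_add_neg]
  rw [h1, h2, Set.preimage_comp, Measure.measure_preimage_neg, measure_preimage_add, hS]

lemma integrable_unifBall {g : E → ℝ} (hg : Continuous g) (δ : ℝ) (hδ : 0 < δ) :
    Integrable g (unifBall n δ) := by
  rw [unifBall]
  refine Integrable.smul_measure ?_ (ENNReal.inv_ne_top.2 (measure_closedBall_pos _ _ hδ).ne')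
  exact ContinuousOn.integrableOn_compact (isCompact_closedBall _ _) hg.continuousOn

lemma key_fderiv_le {f : E → ℝ} (hf : LocallyLipschitz f)
    {D : Set E} (hD : volume Dᶜ = 0) (hdiff : ∀ y ∈ D, DifferentiableAt ℝ f y)
    {x : E} {ε : ℝ} (hε : 0 < ε) {d : E} {c : ℝ}
    (hc : ∀ z ∈ closedBall x ε ∩ D, fderiv ℝ f z d ≤ c)
    {y : E} (hy : dist y x < ε / 2) (hyd : DifferentiableAt ℝ f y) :
    fderiv ℝ f y d ≤ c := by
  obtain ⟨K, t, ht, hlip0⟩ := hf y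
  obtain ⟨r0, hr0, hball⟩ := Metric.mem_nhds_iff.1 ht
  set r := min r0 (ε/2) with hr_def
  have hr : 0 < r := lt_min hr0 (by linarith)
  have hrε : r ≤ ε/2 := min_le_right _ _
  have hlip : LipschitzOnWith K f (ball y r) :=
    hlip0.mono ((ball_subset_ball (min_le_left _ _)).trans hball)
  have hsub : ball y r ⊆ closedBall x ε := by
    intro z hz
    rw [mem_closedBall]
    have h1 : dist z y < r := mem_ball.1 hz
    calc dist z x ≤ dist z y + dist y x := dist_triangle _ _ _
      _ ≤ ε := by linarith
  set T := r / (8 * (‖d‖ + 1)) with hT_def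
  have hT : 0 < T := by
    apply div_pos hr
    positivity
  have hpath : ∀ t : ℝ, HasDerivAt (fun s : ℝ => y + s • d) d t := by
    intro t
    have := ((hasDerivAt_id t).smul_const d).const_add y
    simpa using this
  have hmemT : ∀ t ∈ Icc (0:ℝ) T, y + t • d ∈ ball y (r/2) := by
    intro t htm
    rw [mem_ball, dist_eq_norm, add_sub_cancel_left, norm_smul]
    have h1 : ‖t‖ ≤ T := by
      rw [Real.norm_eq_abs, abs_of_nonneg htm.1]; exact htm.2
    have h2 : ‖t‖ * ‖d‖ ≤ T * ‖d‖ := by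
      apply mul_le_mul_of_nonneg_right h1 (norm_nonneg _)
    have h3 : T * ‖d‖ < r / 2 := by
      rw [hT_def, div_mul_eq_mul_div, div_lt_iff₀ (by positivity : (0:ℝ) < 8 * (‖d‖+1))]
      nlinarith [norm_nonneg d, hr]
    linarith
  -- Step A
  have stepA : ∀ δ : ℝ, 0 < δ → δ < r/4 → ∀ t ∈ Icc (0:ℝ) T,
      f (y + t • d) - f y ≤ c * t + 2 * K * δ := by
    intro δ hδ hδr
    haveI : IsProbabilityMeasure (unifBall n δ) := unifBall_prob δ hδ
    have hfc : Continuous f := hf.continuous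
    have hint : ∀ z : E, Integrable (fun w => f (z - w)) (unifBall n δ) := fun z =>
      integrable_unifBall (hfc.comp (continuous_const.sub continuous_id)) δ hδ
    -- differentiation under the integral
    have hfd : ∀ z ∈ ball y (r/2),
        Integrable (fun w => fderiv ℝ f (z - w)) (unifBall n δ) ∧
        HasFDerivAt (fun z' => ∫ w, f (z' - w) ∂(unifBall n δ))
          (∫ w, fderiv ℝ f (z - w) ∂(unifBall n δ)) z := by
      intro z hz
      have hmemz : ∀ w ∈ closedBall (0:E) δ, ∀ u ∈ ball z (r/4), u - w ∈ ball y r := by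
        intro w hw u hu
        rw [mem_ball]
        have h1 : dist (u - w) u = ‖w‖ := by
          rw [dist_eq_norm]; simp
        have h2 : ‖w‖ ≤ δ := mem_closedBall_zero_iff.1 hw
        have h3 : dist u z < r/4 := mem_ball.1 hu
        have h4 : dist z y < r/2 := mem_ball.1 hz
        calc dist (u - w) y ≤ dist (u - w) u + dist u z + dist z y := dist_triangle4 _ _ _ _
          _ < δ + r/4 + r/2 := by rw [h1]; linarith [lt_of_le_of_lt h2 hδr]
          _ ≤ r := by linarith
      apply hasFDerivAt_integral_of_dominated_loc_of_lip
        (s := ball z (r/4)) (bound := fun _ => (K : ℝ))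
      · exact ball_mem_nhds z (by linarith)
      · filter_upwards with z'
        exact (hfc.comp (continuous_const.sub continuous_id)).aestronglyMeasurable
      · exact hint z
      · exact ((measurable_fderiv ℝ f).comp
          (measurable_const.sub measurable_id)).aestronglyMeasurable
      · filter_upwards [unifBall_ae_mem δ] with w hw
        have hK : Real.nnabs ((K : ℝ≥0) : ℝ) = K := Real.nnabs_coe K
        rw [hK]
        intro a ha b hb
        calc edist (f (a - w)) (f (b - w)) ≤ K * edist (a - w) (b - w) :=
              hlip (hmemz w hw a ha) (hmemz w hw b hb)
          _ = K * edist a b := by rw [edist_sub_right]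
      · exact integrable_const _
      · filter_upwards [ae_sub_mem_of_null hD z δ] with w hw
        have h1 : HasFDerivAt f (fderiv ℝ f (z - w)) (z - w) := (hdiff _ hw).hasFDerivAt
        have h2 : HasFDerivAt (fun z' : E => z' - w) (ContinuousLinearMap.id ℝ _) z :=
          (hasFDerivAt_id z).sub_const w
        have h3 := h1.comp z h2
        rw [ContinuousLinearMap.comp_id] at h3
        exact h3
    -- derivative pairing bound
    have hpair : ∀ z ∈ ball y (r/2),
        (∫ w, fderiv ℝ f (z - w) ∂(unifBall n δ)) d ≤ c := by
      intro z hz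
      obtain ⟨hintF', _⟩ := hfd z hz
      rw [ContinuousLinearMap.integral_apply hintF']
      have hintd : Integrable (fun w => fderiv ℝ f (z - w) d) (unifBall n δ) := by
        have := (ContinuousLinearMap.apply ℝ ℝ d).integrable_comp hintF'
        simpa using this
      have hc' : ∀ᵐ w ∂(unifBall n δ), fderiv ℝ f (z - w) d ≤ c := by
        filter_upwards [ae_sub_mem_of_null hD z δ, unifBall_ae_mem δ] with w hw1 hw2
        apply hc
        refine ⟨hsub ?_, hw1⟩
        rw [mem_ball]
        have h1 : dist (z - w) z = ‖w‖ := by rw [dist_eq_norm]; simp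
        have h2 : ‖w‖ ≤ δ := mem_closedBall_zero_iff.1 hw2
        calc dist (z - w) y ≤ dist (z - w) z + dist z y := dist_triangle _ _ _
          _ < δ + r/2 := by rw [h1]; linarith [mem_ball.1 hz, h2.trans_lt hδr]
          _ < r := by linarith
      calc ∫ w, fderiv ℝ f (z - w) d ∂(unifBall n δ)
          ≤ ∫ _, c ∂(unifBall n δ) := integral_mono_ae hintd (integrable_const c) hc'
        _ = c := by simp
    -- the mollified function decreases along the segment
    have hseg : ∀ t ∈ Icc (0:ℝ) T,
        (∫ w, f (y + t • d - w) ∂(unifBall n δ)) - c * t ≤ ∫ w, f (y - w) ∂(unifBall n δ) := by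
      set g := fun t : ℝ => (∫ w, f (y + t • d - w) ∂(unifBall n δ)) - c * t with hg
      have hgd : ∀ t ∈ Icc (0:ℝ) T, HasDerivAt g
          ((∫ w, fderiv ℝ f (y + t • d - w) ∂(unifBall n δ)) d - c) t := by
        intro t htm
        have h1 := ((hfd _ (hmemT t htm)).2).comp_hasDerivAt t (hpath t)
        have h2 : HasDerivAt (fun s : ℝ => c * s) c t := by
          simpa using (hasDerivAt_id t).const_mul c
        exact h1.sub h2
      have hanti : AntitoneOn g (Icc 0 T) := by
        apply antitoneOn_of_deriv_nonpos (convex_Icc 0 T)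
        · intro t htm; exact (hgd t htm).continuousAt.continuousWithinAt
        · intro t htm
          rw [interior_Icc] at htm
          exact ((hgd t (Ioo_subset_Icc_self htm)).differentiableAt).differentiableWithinAt
        · intro t htm
          rw [interior_Icc] at htm
          rw [(hgd t (Ioo_subset_Icc_self htm)).deriv]
          have := hpair _ (hmemT t (Ioo_subset_Icc_self htm))
          linarith
      intro t htm
      have h0 : (0:ℝ) ∈ Icc (0:ℝ) T := ⟨le_refl _, hT.le⟩
      have := hanti h0 htm htm.1
      simpa [hg] using this
    -- the mollified function approximates f
    have happrox : ∀ z ∈ ball y (r/2),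
        |(∫ w, f (z - w) ∂(unifBall n δ)) - f z| ≤ K * δ := by
      intro z hz
      have h0 : (∫ w, f (z - w) ∂(unifBall n δ)) - f z
          = ∫ w, (f (z - w) - f z) ∂(unifBall n δ) := by
        rw [integral_sub (hint z) (integrable_const _), integral_const]
        simp
      rw [h0, ← Real.norm_eq_abs]
      have hb : ∀ᵐ w ∂(unifBall n δ), ‖f (z - w) - f z‖ ≤ K * δ := by
        filter_upwards [unifBall_ae_mem δ] with w hw
        have hz1 : z ∈ ball y r := ball_subset_ball (by linarith) hz
        have hz2 : z - w ∈ ball y r := by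
          rw [mem_ball]
          have h1 : dist (z - w) z = ‖w‖ := by rw [dist_eq_norm]; simp
          have h2 : ‖w‖ ≤ δ := mem_closedBall_zero_iff.1 hw
          calc dist (z - w) y ≤ dist (z - w) z + dist z y := dist_triangle _ _ _
            _ < δ + r/2 := by rw [h1]; linarith [mem_ball.1 hz, h2.trans_lt hδr]
            _ ≤ r := by linarith
        have h3 := hlip.dist_le_mul _ hz2 _ hz1
        have h4 : dist (z - w) z = ‖w‖ := by rw [dist_eq_norm]; simp
        rw [Real.norm_eq_abs, ← Real.dist_eq]
        calc dist (f (z - w)) (f z) ≤ K * dist (z - w) z := h3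
          _ = K * ‖w‖ := by rw [h4]
          _ ≤ K * δ := mul_le_mul_of_nonneg_left (mem_closedBall_zero_iff.1 hw) K.coe_nonneg
      have := norm_integral_le_of_norm_le_const hb
      simpa using this
    -- combine
    intro t htm
    have h1 := hseg t htm
    have h2 := abs_le.1 (happrox _ (hmemT t htm))
    have h3 := abs_le.1 (happrox y (mem_ball_self (by linarith)))
    linarith [h1, h2.1, h2.2, h3.1, h3.2]
  -- Step B : pass δ → 0
  have stepB : ∀ t ∈ Icc (0:ℝ) T, f (y + t • d) - f y ≤ c * t := by
    intro t htm
    by_contra hcon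
    push_neg at hcon
    set η := f (y + t • d) - f y - c * t with hη_def
    have hη : 0 < η := by simp only [hη_def]; linarith
    set k := (K : ℝ) with hk_def
    have hk : 0 ≤ k := K.coe_nonneg
    set δ := min (r/8) (η / (2*k+1)) with hδ_def
    have hδ : 0 < δ := lt_min (by linarith) (div_pos hη (by linarith))
    have hδr : δ < r/4 := lt_of_le_of_lt (min_le_left _ _) (by linarith)
    have hA := stepA δ hδ hδr t htm
    have h2 : 2 * k * δ ≤ 2 * k * (η / (2*k+1)) :=
      mul_le_mul_of_nonneg_left (min_le_right _ _) (by linarith)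
    have h3 : 2 * k * (η / (2*k+1)) < η := by
      have hq : 0 < η / (2*k+1) := div_pos hη (by linarith)
      have he : η = (η / (2*k+1)) * (2*k+1) := (div_mul_cancel₀ _ (by linarith)).symm
      nlinarith
    have : f (y + t • d) - f y ≤ c * t + 2 * k * δ := hA
    simp only [hη_def] at hη
    linarith
  -- Step C : take the limit of slopes from the right
  have hpathd : HasDerivAt (fun s : ℝ => f (y + s • d)) (fderiv ℝ f y d) 0 := by
    have h1 : HasFDerivAt f (fderiv ℝ f y) (y + (0:ℝ) • d) := by
      simpa using hyd.hasFDerivAt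
    have := h1.comp_hasDerivAt 0 (hpath 0)
    exact this
  have hslope := hasDerivAt_iff_tendsto_slope.1 hpathd
  have hslope' : Tendsto (slope (fun s : ℝ => f (y + s • d)) 0) (𝓝[>] 0)
      (𝓝 (fderiv ℝ f y d)) :=
    hslope.mono_left (nhdsWithin_mono 0 (fun u hu => ne_of_gt hu))
  refine le_of_tendsto hslope' ?_
  filter_upwards [Ioc_mem_nhdsGT hT] with t htm
  rw [slope_def_field]
  have h1 := stepB t ⟨htm.1.le, htm.2⟩
  rw [div_le_iff₀ (by simpa using htm.1 : (0:ℝ) < t - 0)]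
  simp only [zero_smul, add_zero, sub_zero]
  linarith

end Aux

/-- The Clarke subdifferential of `f` at `x`: the convex hull of all limits of gradients
along sequences of differentiability points converging to `x`. -/
noncomputable def clarkeSubdiff {n : ℕ} (f : EuclideanSpace ℝ (Fin n) → ℝ)
    (x : EuclideanSpace ℝ (Fin n)) : Set (EuclideanSpace ℝ (Fin n)) :=
  convexHull ℝ { v | ∃ y : ℕ → EuclideanSpace ℝ (Fin n),
    Tendsto y atTop (nhds x) ∧ (∀ j, DifferentiableAt ℝ f (y j)) ∧
    Tendsto (fun j => gradient f (y j)) atTop (nhds v) }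

theorem clarke_subset_cl_conv_grad {n : ℕ} (f : EuclideanSpace ℝ (Fin n) → ℝ)
    (hf : LocallyLipschitz f) (D : Set (EuclideanSpace ℝ (Fin n)))
    (hD : volume Dᶜ = 0) (hdiff : ∀ y ∈ D, DifferentiableAt ℝ f y) :
    ∀ (x : EuclideanSpace ℝ (Fin n)) (ε : ℝ), 0 < ε →
      clarkeSubdiff f x ⊆
        closure (convexHull ℝ (gradient f '' (Metric.closedBall x ε ∩ D))) := by
  intro x ε hε
  set C := closure (convexHull ℝ (gradient f '' (Metric.closedBall x ε ∩ D))) with hC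
  have hCconv : Convex ℝ C := (convex_convexHull ℝ _).closure
  have hCclosed : IsClosed C := isClosed_closure
  refine convexHull_min ?_ hCconv
  rintro v ⟨y, hy_t, hy_d, hg_t⟩
  by_contra hvC
  obtain ⟨ℓ, u, hu1, hu2⟩ := geometric_hahn_banach_closed_point hCconv hCclosed hvC
  set d := (InnerProductSpace.toDual ℝ (EuclideanSpace ℝ (Fin n))).symm ℓ with hd
  have hgradle : ∀ z ∈ Metric.closedBall x ε ∩ D, fderiv ℝ f z d ≤ u := by
    intro z hz
    rw [← grad_apply_aux]
    exact (hu1 _ (subset_closure (subset_convexHull ℝ _ (mem_image_of_mem _ hz)))).le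
  obtain ⟨N, hN⟩ := Metric.tendsto_atTop.1 hy_t (ε/2) (half_pos hε)
  have hle : ∀ᶠ j in atTop, ℓ (gradient f (y j)) ≤ u := by
    filter_upwards [eventually_atTop.2 ⟨N, fun j hj => hN j hj⟩] with j hj
    rw [grad_apply_aux]
    exact key_fderiv_le hf hD hdiff hε hgradle hj (hy_d j)
  have hlim : Tendsto (fun j => ℓ (gradient f (y j))) atTop (𝓝 (ℓ v)) :=
    (ℓ.continuous.tendsto v).comp hg_t
  have := le_of_tendsto hlim hle
  linarith
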